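/- Let μ = Σ_{k=1}^∞ 2^{-k} δ_k on ℕ and let γ̄ = (1/2) δ_{(1,1,1)} + (1/2) Σ_{k=1}^∞ 4^{-k} (δ_{(2k,2k,2k+1)} + δ_{(2k,2k+1,2k)} + δ_{(2k+1,2k,2k)}) on ℕ³. Then γ̄ is a probability measure on ℕ³ and each of its three marginals equals μ. -/

import Mathlib

open MeasureTheory
open scoped ENNReal

/- ℕ here denotes positive integers: we index by `k : ℕ` and use `k+1` for the
positive integer k+1, so `2*k+2 = 2(k+1)` and `2*k+3 = 2(k+1)+1`. -/

noncomputable def muCex : Measure ℕ :=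
  Measure.sum (fun k : ℕ => ((2 : ℝ≥0∞)⁻¹ ^ (k + 1)) • Measure.dirac (k + 1))

noncomputable def gammaBarCex : Measure (ℕ × ℕ × ℕ) :=
  (2 : ℝ≥0∞)⁻¹ • Measure.dirac (1, 1, 1) +
  (2 : ℝ≥0∞)⁻¹ • Measure.sum (fun k : ℕ => ((4 : ℝ≥0∞)⁻¹ ^ (k + 1)) •
    (Measure.dirac (2*k+2, 2*k+2, 2*k+3) + Measure.dirac (2*k+2, 2*k+3, 2*k+2)
      + Measure.dirac (2*k+3, 2*k+2, 2*k+2)))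

lemma muCex_singleton (n : ℕ) :
    muCex {n} = if n = 0 then 0 else (2 : ℝ≥0∞)⁻¹ ^ n := by
  rw [muCex, Measure.sum_apply _ (measurableSet_singleton n)]
  simp only [Measure.smul_apply, Measure.dirac_apply' _ (measurableSet_singleton n),
    Set.indicator_apply, Set.mem_singleton_iff, smul_eq_mul]
  rcases n with _ | m
  · simp
  · rw [tsum_eq_single m]
    · simp
    · intro k hk
      simp [Nat.succ_ne_succ.mpr hk.symm ∘ Eq.symm]
      omega

lemma map_sum' {α β : Type*} [MeasurableSpace α] [MeasurableSpace β] {ι : Type*} [Countable ι]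
    {f : α → β} (hf : Measurable f) (μ : ι → Measure α) :
    (Measure.sum μ).map f = Measure.sum (fun i => (μ i).map f) := by
  ext s hs
  rw [Measure.map_apply hf hs, Measure.sum_apply _ (hf hs), Measure.sum_apply _ hs]
  exact tsum_congr fun i => (Measure.map_apply hf hs).symm

lemma pow_half_even (m : ℕ) : (2 : ℝ≥0∞)⁻¹ ^ (2*m+2) = (4 : ℝ≥0∞)⁻¹ ^ (m+1) := by
  have : ((4 : ℝ≥0∞))⁻¹ = (2 : ℝ≥0∞)⁻¹ ^ 2 := by
    rw [← ENNReal.inv_pow]; norm_num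
  rw [this, ← pow_mul]; ring_nf

lemma marg_eq (d : ℕ → Measure ℕ)
    (hd : ∀ k n, d k {n} = (if 2*k+2 = n then 2 else 0) + (if 2*k+3 = n then 1 else 0)) :
    ((2 : ℝ≥0∞)⁻¹ • Measure.dirac 1 +
      (2 : ℝ≥0∞)⁻¹ • Measure.sum (fun k => ((4 : ℝ≥0∞)⁻¹ ^ (k+1)) • d k)) = muCex := by
  apply Measure.ext_of_singleton
  intro n
  rw [muCex_singleton, Measure.add_apply, Measure.smul_apply, Measure.smul_apply,
    Measure.sum_apply _ (measurableSet_singleton n)]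
  simp only [Measure.smul_apply, hd, smul_eq_mul, Measure.dirac_apply,
    Set.indicator_apply, Set.mem_singleton_iff, Pi.one_apply]
  rcases n with _ | _ | n
  · have h : ∀ k : ℕ, (4 : ℝ≥0∞)⁻¹ ^ (k+1) *
        ((if 2*k+2 = 0 then (2:ℝ≥0∞) else 0) + (if 2*k+3 = 0 then 1 else 0)) = 0 := by
      intro k; simp
    rw [tsum_congr h]; simp
  · have h : ∀ k : ℕ, (4 : ℝ≥0∞)⁻¹ ^ (k+1) *
        ((if 2*k+2 = 1 then (2:ℝ≥0∞) else 0) + (if 2*k+3 = 1 then 1 else 0)) = 0 := by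
      intro k
      have h1 : ¬(2*k+2 = 1) := by omega
      have h2 : ¬(2*k+3 = 1) := by omega
      simp [h1, h2]
    rw [tsum_congr h]; simp
  · rcases Nat.even_or_odd n with ⟨m, hm⟩ | ⟨m, hm⟩
    · subst hm
      rw [tsum_eq_single m (by
        intro k hk
        have h1 : ¬(2*k+2 = m+m+1+1) := by omega
        have h2 : ¬(2*k+3 = m+m+1+1) := by omega
        simp [h1, h2]; omega)]
      have h1 : 2*m+2 = m+m+1+1 := by omega
      have h2 : ¬(2*m+3 = m+m+1+1) := by omega
      have h3 : ¬(1 = m+m+1+1) := by omega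
      have h4 : m+m+1+1 = 2*m+2 := by omega
      rw [if_pos h1, if_neg h2, if_neg h3, if_neg (by omega : ¬(m+m+1+1 = 0)), h4,
        pow_half_even]
      rw [add_zero, mul_zero, zero_add]
      rw [show ((2:ℝ≥0∞)⁻¹ * ((4:ℝ≥0∞)⁻¹ ^ (m+1) * 2)) = (2⁻¹ * 2) * 4⁻¹ ^ (m+1) by ring]
      rw [ENNReal.inv_mul_cancel (by norm_num) (by norm_num), one_mul]
    · subst hm
      rw [tsum_eq_single m (by
        intro k hk
        have h1 : ¬(2*k+2 = 2*m+1+1+1) := by omega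
        have h2 : ¬(2*k+3 = 2*m+1+1+1) := by omega
        simp [h1, h2]; omega)]
      have h1 : ¬(2*m+2 = 2*m+1+1+1) := by omega
      have h2 : 2*m+3 = 2*m+1+1+1 := by omega
      have h3 : ¬(1 = 2*m+1+1+1) := by omega
      rw [if_neg h1, if_pos h2, if_neg h3, if_neg (by omega : ¬(2*m+1+1+1 = 0)),
        show (2:ℝ≥0∞)⁻¹ ^ (2*m+1+1+1) = 4⁻¹^(m+1) * 2⁻¹ by
          rw [show 2*m+1+1+1 = (2*m+2)+1 from rfl, pow_succ, pow_half_even]]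
      ring

lemma dirac3_singleton (a b c n : ℕ) (hab : a = b) (hc : c = a + 1) :
    (Measure.dirac a + Measure.dirac b + Measure.dirac c : Measure ℕ) {n}
      = (if a = n then 2 else 0) + (if c = n then 1 else 0) := by
  subst hab hc
  simp only [Measure.add_apply, Measure.dirac_apply, Set.indicator_apply,
    Set.mem_singleton_iff, Pi.one_apply]
  split_ifs with h1 h2 <;> first | omega | norm_num

lemma meas_fst : Measurable (fun p : ℕ × ℕ × ℕ => p.1) := measurable_fst
lemma meas_snd1 : Measurable (fun p : ℕ × ℕ × ℕ => p.2.1) := measurable_fst.comp measurable_snd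
lemma meas_snd2 : Measurable (fun p : ℕ × ℕ × ℕ => p.2.2) := measurable_snd.comp measurable_snd

lemma gamma_map (f : ℕ × ℕ × ℕ → ℕ) (hf : Measurable f) :
    Measure.map f gammaBarCex = (2 : ℝ≥0∞)⁻¹ • Measure.dirac (f (1,1,1)) +
      (2 : ℝ≥0∞)⁻¹ • Measure.sum (fun k : ℕ => ((4 : ℝ≥0∞)⁻¹ ^ (k + 1)) •
        (Measure.dirac (f (2*k+2, 2*k+2, 2*k+3)) + Measure.dirac (f (2*k+2, 2*k+3, 2*k+2))
          + Measure.dirac (f (2*k+3, 2*k+2, 2*k+2)))) := by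
  rw [gammaBarCex, Measure.map_add _ _ hf, Measure.map_smul, Measure.map_smul,
    map_sum' hf, Measure.map_dirac' hf]
  simp only [Measure.map_smul, Measure.map_add _ _ hf, Measure.map_dirac' hf]

lemma map_fst_eq : Measure.map (fun p : ℕ × ℕ × ℕ => p.1) gammaBarCex = muCex := by
  rw [gamma_map _ meas_fst]
  exact marg_eq _ (fun k n => dirac3_singleton _ _ _ _ rfl rfl)

lemma map_snd1_eq : Measure.map (fun p : ℕ × ℕ × ℕ => p.2.1) gammaBarCex = muCex := by
  rw [gamma_map _ meas_snd1]
  refine marg_eq _ (fun k n => ?_)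
  have : (Measure.dirac (2*k+2) + Measure.dirac (2*k+3) + Measure.dirac (2*k+2) : Measure ℕ)
      = Measure.dirac (2*k+2) + Measure.dirac (2*k+2) + Measure.dirac (2*k+3) := by
    abel
  simpa [this] using dirac3_singleton (2*k+2) (2*k+2) (2*k+3) n rfl rfl

lemma map_snd2_eq : Measure.map (fun p : ℕ × ℕ × ℕ => p.2.2) gammaBarCex = muCex := by
  rw [gamma_map _ meas_snd2]
  refine marg_eq _ (fun k n => ?_)
  have : (Measure.dirac (2*k+3) + Measure.dirac (2*k+2) + Measure.dirac (2*k+2) : Measure ℕ)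
      = Measure.dirac (2*k+2) + Measure.dirac (2*k+2) + Measure.dirac (2*k+3) := by
    abel
  simpa [this] using dirac3_singleton (2*k+2) (2*k+2) (2*k+3) n rfl rfl

lemma muCex_prob : IsProbabilityMeasure muCex := by
  constructor
  rw [muCex, Measure.sum_apply _ MeasurableSet.univ]
  simp only [Measure.smul_apply, measure_univ, smul_eq_mul, mul_one, Measure.dirac_apply_of_mem
    (Set.mem_univ _)]
  have : ∀ k : ℕ, (2 : ℝ≥0∞)⁻¹ ^ (k+1) = 2⁻¹ * 2⁻¹ ^ k := fun k => by rw [pow_succ]; ring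
  rw [tsum_congr this, ENNReal.tsum_mul_left, ENNReal.tsum_geometric]
  rw [show (1:ℝ≥0∞) - 2⁻¹ = 2⁻¹ by
    rw [ENNReal.sub_eq_of_eq_add (by norm_num)]
    rw [← two_mul, ENNReal.mul_inv_cancel (by norm_num) (by norm_num)]]
  exact ENNReal.mul_inv_cancel (by norm_num) (by norm_num)

theorem stmt1 :
    IsProbabilityMeasure gammaBarCex ∧
    Measure.map (fun p : ℕ × ℕ × ℕ => p.1) gammaBarCex = muCex ∧
    Measure.map (fun p : ℕ × ℕ × ℕ => p.2.1) gammaBarCex = muCex ∧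
    Measure.map (fun p : ℕ × ℕ × ℕ => p.2.2) gammaBarCex = muCex := by
  refine ⟨?_, map_fst_eq, map_snd1_eq, map_snd2_eq⟩
  constructor
  have := muCex_prob.measure_univ
  rw [← map_fst_eq, Measure.map_apply meas_fst MeasurableSet.univ, Set.preimage_univ] at this
  exact this
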